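/- arXiv:2012.01945 — 7 statements merged into one kernel-verified Lean document; each statement's English description precedes it below -/
import Mathlib

section
/- With Y and P defined from a finite question set Q with truthful answers for a target set T: if Q_Yes is nonempty, then Y ∩ P ≠ ∅. -/
/-- With the Yes-candidates `Y = ⋃_{q ∈ Q_Yes} anc(q)` and potential
targets `P = V \ ((⋃_{q ∈ Q_No} des(q)) ∪ (⋃_{q ∈ Q_Yes} anc(q) \ {q}))` defined from a
finite question set `Q` with truthful answers for a target set `T`: if `Q_Yes` is
nonempty, then `Y ∩ P ≠ ∅`. -/
theorem stmt2 {V : Type*} [Fintype V] (R : V → V → Prop) (r : V)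
    (hrefl : ∀ v, R v v)
    (htrans : ∀ u v w, R u v → R v w → R u w)
    (hanti : ∀ u v, R u v → R v u → u = v)
    (hroot : ∀ v, R r v)
    (hchain : ∀ u v w, R u v → R w v → R u w ∨ R w u)
    (T : Set V) (hT : ∀ t ∈ T, ∀ t' ∈ T, t ≠ t' → ¬ R t t')
    (Q : Set V)
    (hQYes : {q ∈ Q | ∃ t ∈ T, R q t}.Nonempty) :
    (⋃ q ∈ {q ∈ Q | ∃ t ∈ T, R q t}, {u | R u q}) ∩
      (Set.univ \ ((⋃ q ∈ {q ∈ Q | ¬ ∃ t ∈ T, R q t}, {u | R q u}) ∪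
        (⋃ q ∈ {q ∈ Q | ∃ t ∈ T, R q t}, ({u | R u q} \ {q})))) ≠ (∅ : Set V) := by
  classical
  set S := {q ∈ Q | ∃ t ∈ T, R q t} with hS
  -- descendant count is strictly smaller for strict descendants
  have hlt : ∀ a b : V, R a b → a ≠ b →
      ({u | R b u}).ncard < ({u | R a u}).ncard := by
    intro a b hab hne
    apply Set.ncard_lt_ncard
    · constructor
      · intro u hu; exact htrans a b u hab hu
      · intro hsub
        have : R b a := hsub (hrefl a)
        exact hne (hanti a b hab this)
    · exact Set.toFinite _
  -- pick q* in S minimizing ncard of descendants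
  obtain ⟨q0, hq0, hmin⟩ := Set.Finite.exists_minimalFor
    (fun q => ({u | R q u}).ncard) S (Set.toFinite S) hQYes
  obtain ⟨hq0Q, t0, ht0T, hq0t0⟩ := hq0
  intro hcontra
  have hmem : q0 ∈ (⋃ q ∈ S, {u | R u q}) ∩
      (Set.univ \ ((⋃ q ∈ {q ∈ Q | ¬ ∃ t ∈ T, R q t}, {u | R q u}) ∪
        (⋃ q ∈ S, ({u | R u q} \ {q})))) := by
    constructor
    · exact Set.mem_biUnion ⟨hq0Q, t0, ht0T, hq0t0⟩ (hrefl q0)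
    · refine ⟨trivial, ?_⟩
      rintro (h | h)
      · simp only [Set.mem_iUnion, Set.mem_setOf_eq] at h
        obtain ⟨q, ⟨hqQ, hqNo⟩, hqq0⟩ := h
        exact hqNo ⟨t0, ht0T, htrans q q0 t0 hqq0 hq0t0⟩
      · simp only [Set.mem_iUnion] at h
        obtain ⟨q, hqS, hq0q, hne⟩ := h
        simp only [Set.mem_setOf_eq] at hq0q
        have hne' : q0 ≠ q := by simpa using hne
        have := hlt q0 q hq0q hne'
        have h2 : ({u | R q0 u}).ncard ≤ ({u | R q u}).ncard := hmin hqS (le_of_lt this)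
        omega
  rw [hcontra] at hmem
  exact hmem
end

section
/- With Y and P defined from a finite question set Q with truthful answers for a target set T: if P ⊆ Y, then the targets are exactly the potential targets, i.e., T = P. -/
/-- With `Y = ⋃_{q ∈ Q_Yes} anc(q)` and
`P = V \ ((⋃_{q ∈ Q_No} des(q)) ∪ (⋃_{q ∈ Q_Yes} anc(q) \ {q}))` defined from a finite
question set `Q` with truthful answers for a target set `T`: if `P ⊆ Y`, then the
targets are exactly the potential targets, i.e. `T = P`. -/
theorem stmt5 {V : Type*} [Fintype V] (R : V → V → Prop) (r : V)
    (hrefl : ∀ v, R v v)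
    (htrans : ∀ u v w, R u v → R v w → R u w)
    (hanti : ∀ u v, R u v → R v u → u = v)
    (hroot : ∀ v, R r v)
    (hchain : ∀ u v w, R u v → R w v → R u w ∨ R w u)
    (T : Set V) (hT : ∀ t ∈ T, ∀ t' ∈ T, t ≠ t' → ¬ R t t')
    (Q : Set V)
    (hPY : Set.univ \ ((⋃ q ∈ {q ∈ Q | ¬ ∃ t ∈ T, R q t}, {u | R q u}) ∪
        (⋃ q ∈ {q ∈ Q | ∃ t ∈ T, R q t}, ({u | R u q} \ {q}))) ⊆
      ⋃ q ∈ {q ∈ Q | ∃ t ∈ T, R q t}, {u | R u q}) :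
    T = Set.univ \ ((⋃ q ∈ {q ∈ Q | ¬ ∃ t ∈ T, R q t}, {u | R q u}) ∪
        (⋃ q ∈ {q ∈ Q | ∃ t ∈ T, R q t}, ({u | R u q} \ {q}))) := by
  have hTP : T ⊆ Set.univ \ ((⋃ q ∈ {q ∈ Q | ¬ ∃ t ∈ T, R q t}, {u | R q u}) ∪
      (⋃ q ∈ {q ∈ Q | ∃ t ∈ T, R q t}, ({u | R u q} \ {q}))) := by
    intro t ht
    simp only [Set.mem_diff, Set.mem_univ, true_and, Set.mem_union, Set.mem_iUnion,
      Set.mem_sep_iff, Set.mem_setOf_eq, Set.mem_diff, Set.mem_singleton_iff, not_or,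
      not_exists, not_and, not_not]
    constructor
    · rintro q ⟨hqQ, hno⟩ hqt
      exact hno t ht hqt
    · rintro q ⟨hqQ, t', ht', hqt'⟩ htq
      rcases eq_or_ne t t' with rfl | hne'
      · exact hanti t q htq hqt'
      · exact absurd (htrans t q t' htq hqt') (hT t ht t' ht' hne')
  refine hTP.antisymm ?_
  intro p hp
  have hpY := hPY hp
  simp only [Set.mem_iUnion, Set.mem_sep_iff, Set.mem_setOf_eq] at hpY
  obtain ⟨q, ⟨hqQ, t, ht, hqt⟩, hpq⟩ := hpY
  -- p = q
  have hpm := hp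
  simp only [Set.mem_diff, Set.mem_univ, true_and, Set.mem_union, Set.mem_iUnion,
    Set.mem_sep_iff, Set.mem_setOf_eq, Set.mem_diff, Set.mem_singleton_iff, not_or,
    not_exists, not_and, not_not] at hpm
  obtain ⟨hpNo, hpYes⟩ := hpm
  have hpq' : p = q := hpYes q ⟨hqQ, t, ht, hqt⟩ hpq
  have hpt : R p t := hpq' ▸ hqt
  -- t ∈ P, hence t ∈ Y, hence t ∈ Q_Yes and t = q'
  have htP := hTP ht
  have htY := hPY htP
  simp only [Set.mem_iUnion, Set.mem_sep_iff, Set.mem_setOf_eq] at htY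
  obtain ⟨q', ⟨hq'Q, t'', ht'', hq't''⟩, htq'⟩ := htY
  have htt'' : R t t'' := htrans t q' t'' htq' hq't''
  have htEq : t = t'' := by
    by_contra hne
    exact hT t ht t'' ht'' hne htt''
  have htq : t = q' := hanti t q' htq' (htEq ▸ hq't'')
  -- now p = t
  have : p = t := hpYes t ⟨htq ▸ hq'Q, t, ht, hrefl t⟩ hpt
  exact this ▸ ht
end

section
/- Let s, v ∈ V with s → v, and let P ⊆ V be a finite set. Then f({s},P) − f({s}, P \ des(v)) = Σ_{t ∈ P ∩ des(v)} dist(v,t) + dist(s,v) · |P ∩ des(v)|; that is, the No-gain of questioning v when the current Yes-candidate is s equals f({v}, P ∩ des(v)) + dist(s,v) · |P ∩ des(v)|. -/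
open scoped Classical

/-- Pair-wise penalty `f⟨v,t⟩`: `dist(v,t) = depth t - depth v` if `v → t`,
and `dist(r,t) = depth t` otherwise. -/
noncomputable def fpair {V : Type*} (R : V → V → Prop) (depth : V → ℕ) (v t : V) : ℕ :=
  if R v t then depth t - depth v else depth t

/-- Set penalty `f(S,t) = min_{v ∈ S ∪ {r}} f⟨v,t⟩`. -/
noncomputable def fsel {V : Type*} (R : V → V → Prop) (depth : V → ℕ) (r : V)
    (S : Finset V) (t : V) : ℕ :=
  (insert r S).inf' (Finset.insert_nonempty r S) fun v => fpair R depth v t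

/-- Set-wise penalty `f(S,P) = Σ_{t ∈ P} f(S,t)`. -/
noncomputable def fsum {V : Type*} (R : V → V → Prop) (depth : V → ℕ) (r : V)
    (S : Finset V) (P : Finset V) : ℕ :=
  ∑ t ∈ P, fsel R depth r S t

lemma fsel_single {V : Type*} (R : V → V → Prop) (depth : V → ℕ) (r : V)
    (hdepth_root : depth r = 0) (x t : V) :
    fsel R depth r {x} t = fpair R depth x t := by
  have h1 : fpair R depth r t = depth t := by
    unfold fpair; split <;> simp [hdepth_root]
  have h2 : fpair R depth x t ≤ depth t := by
    unfold fpair; split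
    · exact Nat.sub_le _ _
    · exact le_rfl
  unfold fsel
  apply le_antisymm
  · exact Finset.inf'_le _ (by simp)
  · apply Finset.le_inf'
    intro b hb
    rcases Finset.mem_insert.mp hb with rfl | hb
    · rw [h1]; exact h2
    · rw [Finset.mem_singleton.mp hb]

/-- for `s → v` and finite `P ⊆ V`,
`f({s},P) − f({s}, P \ des(v)) = Σ_{t ∈ P ∩ des(v)} dist(v,t) + dist(s,v)·|P ∩ des(v)|`,
i.e. this No-gain equals `f({v}, P ∩ des(v)) + dist(s,v)·|P ∩ des(v)|`. -/
theorem stmt10 {V : Type*} [Fintype V] (R : V → V → Prop) (r : V) (depth : V → ℕ)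
    (hrefl : ∀ v, R v v)
    (htrans : ∀ u v w, R u v → R v w → R u w)
    (hanti : ∀ u v, R u v → R v u → u = v)
    (hroot : ∀ v, R r v)
    (hchain : ∀ u v w, R u v → R w v → R u w ∨ R w u)
    (hdepth_root : depth r = 0)
    (hdepth_mono : ∀ u v, R u v → depth u ≤ depth v)
    (hdepth_eq : ∀ u v, R u v → (depth u = depth v ↔ u = v))
    (s v : V) (hsv : R s v) (P : Finset V) :
    (fsum R depth r {s} P : ℤ) -
        (fsum R depth r {s} (P.filter fun t => ¬ R v t) : ℤ) =
      (∑ t ∈ P.filter (fun t => R v t), ((depth t - depth v : ℕ) : ℤ)) +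
        ((depth v - depth s : ℕ) : ℤ) * (P.filter fun t => R v t).card ∧
    (fsum R depth r {s} P : ℤ) -
        (fsum R depth r {s} (P.filter fun t => ¬ R v t) : ℤ) =
      (fsum R depth r {v} (P.filter fun t => R v t) : ℤ) +
        ((depth v - depth s : ℕ) : ℤ) * (P.filter fun t => R v t).card := by
  have hsplit : fsum R depth r {s} P
      = fsum R depth r {s} (P.filter fun t => R v t)
        + fsum R depth r {s} (P.filter fun t => ¬ R v t) := by
    unfold fsum
    exact (Finset.sum_filter_add_sum_filter_not P (fun t => R v t) _).symm
  have hdiff : (fsum R depth r {s} P : ℤ) -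
      (fsum R depth r {s} (P.filter fun t => ¬ R v t) : ℤ)
      = (fsum R depth r {s} (P.filter fun t => R v t) : ℤ) := by
    rw [hsplit]; push_cast; ring
  have hkey : fsum R depth r {s} (P.filter fun t => R v t)
      = (∑ t ∈ P.filter (fun t => R v t), (depth t - depth v))
        + (P.filter fun t => R v t).card * (depth v - depth s) := by
    unfold fsum
    rw [Finset.card_eq_sum_ones, Finset.sum_mul, one_mul, ← Finset.sum_add_distrib]
    apply Finset.sum_congr rfl
    intro t ht
    have hvt := (Finset.mem_filter.mp ht).2
    have hst : R s t := htrans _ _ _ hsv hvt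
    have h1 := hdepth_mono _ _ hsv
    have h2 := hdepth_mono _ _ hvt
    rw [fsel_single R depth r hdepth_root]
    simp only [fpair, if_pos hst]
    omega
  have hkey2 : fsum R depth r {v} (P.filter fun t => R v t)
      = ∑ t ∈ P.filter (fun t => R v t), (depth t - depth v) := by
    unfold fsum
    apply Finset.sum_congr rfl
    intro t ht
    have hvt := (Finset.mem_filter.mp ht).2
    rw [fsel_single R depth r hdepth_root]
    simp [fpair, hvt]
  constructor
  · rw [hdiff, hkey]; push_cast [Nat.cast_sum]; ring
  · rw [hdiff, hkey, hkey2]; push_cast [Nat.cast_sum]; ring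
end

section
/- For every finite set P ⊆ V and every finite set S ⊆ V, f(S,P) ≥ f({r},P) − Σ_{x ∈ S} IG(x), where IG(x) = |P ∩ des(x)| · dist(r,x); that is, the total saving of a selection S over selecting only the root is at most the sum of the selected gains of its members. -/
open scoped Classical

/-- Selected gain `IG(x) = |P ∩ des(x)| · dist(r,x)` (with `dist(r,x) = depth x`). -/
noncomputable def selGain {V : Type*} (R : V → V → Prop) (depth : V → ℕ)
    (P : Finset V) (x : V) : ℕ :=
  (P.filter fun t => R x t).card * depth x

/-- for all finite `P, S ⊆ V`,
`f(S,P) ≥ f({r},P) − Σ_{x ∈ S} IG(x)`. -/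
theorem stmt11 {V : Type*} [Fintype V] (R : V → V → Prop) (r : V) (depth : V → ℕ)
    (hrefl : ∀ v, R v v)
    (htrans : ∀ u v w, R u v → R v w → R u w)
    (hanti : ∀ u v, R u v → R v u → u = v)
    (hroot : ∀ v, R r v)
    (hchain : ∀ u v w, R u v → R w v → R u w ∨ R w u)
    (hdepth_root : depth r = 0)
    (hdepth_mono : ∀ u v, R u v → depth u ≤ depth v)
    (hdepth_eq : ∀ u v, R u v → (depth u = depth v ↔ u = v))
    (P S : Finset V) :
    (fsum R depth r S P : ℤ) ≥
      (fsum R depth r {r} P : ℤ) - ∑ x ∈ S, (selGain R depth P x : ℤ) := by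

  have h1 : fsum R depth r {r} P = ∑ t ∈ P, depth t := by
    unfold fsum fsel
    refine Finset.sum_congr rfl fun t _ => ?_
    simp [fpair, hroot t, hdepth_root]
  have h2 : ∀ t, (depth t : ℤ) ≤ (fsel R depth r S t : ℤ) +
      ∑ x ∈ S, (if R x t then (depth x : ℤ) else 0) := by
    intro t
    have hnn : (0:ℤ) ≤ ∑ x ∈ S, (if R x t then (depth x : ℤ) else 0) :=
      Finset.sum_nonneg fun x _ => by positivity
    obtain ⟨v, hv, hveq⟩ := Finset.exists_mem_eq_inf' (Finset.insert_nonempty r S)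
      (fun v => fpair R depth v t)
    rw [fsel, hveq]
    by_cases hR : R v t
    · rcases Finset.mem_insert.1 hv with h | h
      · subst h; simp [fpair, hR, hdepth_root]; linarith
      · have hle := hdepth_mono v t hR
        have hcast : ((fpair R depth v t : ℕ) : ℤ) = (depth t : ℤ) - depth v := by
          simp [fpair, hR]; omega
        have hsingle : (depth v : ℤ) ≤ ∑ x ∈ S, (if R x t then (depth x : ℤ) else 0) := by
          have := Finset.single_le_sum (f := fun x => (if R x t then (depth x : ℤ) else 0))
            (fun x _ => by positivity) h
          simpa [hR] using this
        linarith
    · simp [fpair, hR]; linarith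
  have h3 : ∀ x ∈ S, ∑ t ∈ P, (if R x t then (depth x : ℤ) else 0)
      = (selGain R depth P x : ℤ) := by
    intro x _
    rw [← Finset.sum_filter]
    simp [selGain, mul_comm]
  have hsum : (∑ t ∈ P, (depth t : ℤ)) ≤ (fsum R depth r S P : ℤ) +
      ∑ x ∈ S, (selGain R depth P x : ℤ) := by
    calc (∑ t ∈ P, (depth t : ℤ))
        ≤ ∑ t ∈ P, ((fsel R depth r S t : ℤ) + ∑ x ∈ S, (if R x t then (depth x : ℤ) else 0)) :=
          Finset.sum_le_sum fun t _ => h2 t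
      _ = (fsum R depth r S P : ℤ) + ∑ x ∈ S, ∑ t ∈ P, (if R x t then (depth x : ℤ) else 0) := by
          rw [Finset.sum_add_distrib, Finset.sum_comm]; push_cast [fsum]; ring
      _ = _ := by rw [Finset.sum_congr rfl h3]
  have : (fsum R depth r {r} P : ℤ) = ∑ t ∈ P, (depth t : ℤ) := by
    rw [h1]; push_cast; ring
  linarith
end

section
/- For every vertex x ∈ V and every finite set P ⊆ V, the single-selection penalty satisfies exactly f({x},P) = f({r},P) − |P ∩ des(x)| · dist(r,x); that is, the saving of selecting the single vertex x over the root equals the selected gain IG(x) = |P ∩ des(x)| · dist(r,x). -/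
open scoped Classical

/-- for every `x ∈ V` and finite `P ⊆ V`,
`f({x},P) = f({r},P) − |P ∩ des(x)| · dist(r,x)`, i.e. the saving of selecting the
single vertex `x` over the root equals `IG(x)`. -/
theorem stmt12 {V : Type*} [Fintype V] (R : V → V → Prop) (r : V) (depth : V → ℕ)
    (hrefl : ∀ v, R v v)
    (htrans : ∀ u v w, R u v → R v w → R u w)
    (hanti : ∀ u v, R u v → R v u → u = v)
    (hroot : ∀ v, R r v)
    (hchain : ∀ u v w, R u v → R w v → R u w ∨ R w u)
    (hdepth_root : depth r = 0)
    (hdepth_mono : ∀ u v, R u v → depth u ≤ depth v)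
    (hdepth_eq : ∀ u v, R u v → (depth u = depth v ↔ u = v))
    (x : V) (P : Finset V) :
    (fsum R depth r {x} P : ℤ) =
      (fsum R depth r {r} P : ℤ) - (selGain R depth P x : ℤ) := by
  have hr : ∀ t, fpair R depth r t = depth t := by
    intro t; simp [fpair, hroot t, hdepth_root]
  have hselr : ∀ t, fsel R depth r {r} t = depth t := by
    intro t; simp [fsel, hr]
  have hselx : ∀ t, fsel R depth r {x} t = fpair R depth x t := by
    intro t
    have hle : fpair R depth x t ≤ depth t := by
      unfold fpair; split <;> omega
    apply le_antisymm
    · exact Finset.inf'_le _ (by simp)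
    · apply Finset.le_inf'
      intro v hv
      rcases Finset.mem_insert.1 hv with h | h
      · subst h; rw [hr]; exact hle
      · rw [Finset.mem_singleton.1 h]
  have key : ∀ t, (fpair R depth x t : ℤ) =
      (depth t : ℤ) - (if R x t then (depth x : ℤ) else 0) := by
    intro t
    unfold fpair
    by_cases h : R x t
    · have := hdepth_mono x t h
      simp [h]; omega
    · simp [h]
  simp only [fsum, hselr, hselx, selGain]
  push_cast
  rw [Finset.sum_congr rfl fun t _ => key t, Finset.sum_sub_distrib]
  rw [← Finset.sum_filter, Finset.sum_const, nsmul_eq_mul]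
end

section
/- For every finite nonempty set Y ⊆ V, every finite set P ⊆ V, and every integer k ≥ 1, the approximate potential penalty is at most the exact potential penalty: g'(Y,P,k) ≤ g(Y,P,k). -/
open scoped Classical

/-- Potential penalty `g(Y,P,k) = min { f(S,P) : S ⊆ Y, S nonempty, |S| ≤ k }`. -/
noncomputable def gpen {V : Type*} (R : V → V → Prop) (depth : V → ℕ) (r : V)
    (Y P : Finset V) (k : ℕ) : ℕ :=
  sInf {n : ℕ | ∃ S : Finset V, S ⊆ Y ∧ S.Nonempty ∧ S.card ≤ k ∧ n = fsum R depth r S P}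

/-- Approximate potential penalty
`g'(Y,P,k) = f({r},P) − max { Σ_{x ∈ S} IG(x) : S ⊆ Y, S nonempty, |S| ≤ k }`
(as an integer, since the subtraction may be negative). -/
noncomputable def gapprox {V : Type*} (R : V → V → Prop) (depth : V → ℕ) (r : V)
    (Y P : Finset V) (k : ℕ) : ℤ :=
  (fsum R depth r {r} P : ℤ) -
    sSup {m : ℤ | ∃ S : Finset V, S ⊆ Y ∧ S.Nonempty ∧ S.card ≤ k ∧
      m = ∑ x ∈ S, (selGain R depth P x : ℤ)}

/-- for every finite nonempty `Y ⊆ V`, finite `P ⊆ V`, and `k ≥ 1`,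
the approximate potential penalty is at most the exact one: `g'(Y,P,k) ≤ g(Y,P,k)`. -/
theorem stmt13 {V : Type*} [Fintype V] (R : V → V → Prop) (r : V) (depth : V → ℕ)
    (hrefl : ∀ v, R v v)
    (htrans : ∀ u v w, R u v → R v w → R u w)
    (hanti : ∀ u v, R u v → R v u → u = v)
    (hroot : ∀ v, R r v)
    (hchain : ∀ u v w, R u v → R w v → R u w ∨ R w u)
    (hdepth_root : depth r = 0)
    (hdepth_mono : ∀ u v, R u v → depth u ≤ depth v)
    (hdepth_eq : ∀ u v, R u v → (depth u = depth v ↔ u = v))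
    (Y P : Finset V) (hY : Y.Nonempty) (k : ℕ) (hk : 1 ≤ k) :
    gapprox R depth r Y P k ≤ (gpen R depth r Y P k : ℤ) := by
  classical
  -- the candidate set for gpen is nonempty
  obtain ⟨y, hy⟩ := hY
  have hne : {n : ℕ | ∃ S : Finset V, S ⊆ Y ∧ S.Nonempty ∧ S.card ≤ k ∧
      n = fsum R depth r S P}.Nonempty := by
    exact ⟨fsum R depth r {y} P, {y}, by simpa using hy, ⟨y, by simp⟩,
      by simpa using hk, rfl⟩
  obtain ⟨S, hSY, hSne, hSk, hSg⟩ := Nat.sInf_mem hne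
  -- key pointwise inequality
  have hpoint : ∀ t, depth t ≤ fsel R depth r S t +
      ∑ x ∈ S, (if R x t then depth x else 0) := by
    intro t
    obtain ⟨v, hv, hveq⟩ := Finset.exists_mem_eq_inf' (Finset.insert_nonempty r S)
      (fun v => fpair R depth v t)
    rw [fsel, hveq]
    by_cases hRvt : R v t
    · rcases Finset.mem_insert.mp hv with hvr | hvS
      · subst hvr
        simp [fpair, hRvt, hdepth_root]
      · have h1 : depth v ≤ ∑ x ∈ S, (if R x t then depth x else 0) := by
          have := Finset.single_le_sum (f := fun x => if R x t then depth x else 0)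
            (fun i _ => by positivity) hvS
          simpa [hRvt] using this
        have h2 : depth v ≤ depth t := hdepth_mono v t hRvt
        simp only [fpair, hRvt, if_pos]
        omega
    · simp [fpair, hRvt]
  -- f({r},P) = sum of depths
  have hfr : fsum R depth r {r} P = ∑ t ∈ P, depth t := by
    apply Finset.sum_congr rfl
    intro t _
    simp [fsel, fpair, hroot t, hdepth_root]
  -- sum the pointwise inequality
  have hsum : fsum R depth r {r} P ≤ fsum R depth r S P +
      ∑ x ∈ S, selGain R depth P x := by
    rw [hfr, fsum]
    calc ∑ t ∈ P, depth t
        ≤ ∑ t ∈ P, (fsel R depth r S t + ∑ x ∈ S, (if R x t then depth x else 0)) :=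
          Finset.sum_le_sum fun t _ => hpoint t
      _ = (∑ t ∈ P, fsel R depth r S t) +
          ∑ t ∈ P, ∑ x ∈ S, (if R x t then depth x else 0) := Finset.sum_add_distrib
      _ = (∑ t ∈ P, fsel R depth r S t) + ∑ x ∈ S, selGain R depth P x := by
          congr 1
          rw [Finset.sum_comm]
          apply Finset.sum_congr rfl
          intro x _
          rw [selGain, ← Finset.sum_filter, Finset.sum_const, smul_eq_mul]
  -- the sup is at least the gain of S
  set M : Set ℤ := {m : ℤ | ∃ S : Finset V, S ⊆ Y ∧ S.Nonempty ∧ S.card ≤ k ∧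
      m = ∑ x ∈ S, (selGain R depth P x : ℤ)} with hM
  have hbdd : BddAbove M := by
    refine ⟨∑ x ∈ Y, (selGain R depth P x : ℤ), ?_⟩
    rintro m ⟨T, hTY, -, -, rfl⟩
    exact Finset.sum_le_sum_of_subset_of_nonneg hTY fun i _ _ => by positivity
  have hmem : (∑ x ∈ S, (selGain R depth P x : ℤ)) ∈ M := ⟨S, hSY, hSne, hSk, rfl⟩
  have hle : (∑ x ∈ S, (selGain R depth P x : ℤ)) ≤ sSup M := le_csSup hbdd hmem
  have : (∑ x ∈ S, (selGain R depth P x : ℤ)) = ((∑ x ∈ S, selGain R depth P x : ℕ) : ℤ) := by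
    push_cast; ring
  rw [gapprox, gpen, hSg, ← hM]
  have hsum' : (fsum R depth r {r} P : ℤ) ≤
      (fsum R depth r S P : ℤ) + ∑ x ∈ S, (selGain R depth P x : ℤ) := by
    rw [this]; exact_mod_cast hsum
  linarith
end

section
/- For every finite nonempty set Y ⊆ V and every finite set P ⊆ V, the approximate potential penalty with k = 1 coincides with the exact potential penalty: g'(Y,P,1) = g(Y,P,1). -/
open scoped Classical

/-- for every finite nonempty `Y ⊆ V` and finite `P ⊆ V`, the
approximate potential penalty with `k = 1` coincides with the exact one:
`g'(Y,P,1) = g(Y,P,1)`. -/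
theorem stmt15 {V : Type*} [Fintype V] (R : V → V → Prop) (r : V) (depth : V → ℕ)
    (hrefl : ∀ v, R v v)
    (htrans : ∀ u v w, R u v → R v w → R u w)
    (hanti : ∀ u v, R u v → R v u → u = v)
    (hroot : ∀ v, R r v)
    (hchain : ∀ u v w, R u v → R w v → R u w ∨ R w u)
    (hdepth_root : depth r = 0)
    (hdepth_mono : ∀ u v, R u v → depth u ≤ depth v)
    (hdepth_eq : ∀ u v, R u v → (depth u = depth v ↔ u = v))
    (Y P : Finset V) (hY : Y.Nonempty) :
    gapprox R depth r Y P 1 = (gpen R depth r Y P 1 : ℤ) := by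
  classical
  -- pointwise key fact
  have hfr : ∀ t, fsel R depth r {r} t = depth t := by
    intro t
    simp [fsel, fpair, hroot t, hdepth_root]
  have hfsel : ∀ x t, fsel R depth r {x} t + (if R x t then depth x else 0) = depth t := by
    intro x t
    have h1 : fsel R depth r {x} t = min (fpair R depth r t) (fpair R depth x t) := by
      by_cases hxr : x = r
      · subst hxr; simp [fsel, fpair]
      · rw [fsel]
        rw [Finset.inf'_insert (Finset.singleton_nonempty x)]
        simp
    have hr : fpair R depth r t = depth t := by simp [fpair, hroot t, hdepth_root]
    rw [h1, hr]
    by_cases h : R x t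
    · have hle := hdepth_mono x t h
      simp only [fpair, if_pos h]
      omega
    · simp [fpair, h]
  have hIG : ∀ x, selGain R depth P x = ∑ t ∈ P, (if R x t then depth x else 0) := by
    intro x
    rw [selGain, ← Finset.sum_filter]
    simp [Finset.sum_const, mul_comm]
  have hkey : ∀ x, fsum R depth r {x} P + selGain R depth P x = fsum R depth r {r} P := by
    intro x
    rw [hIG, fsum, fsum, ← Finset.sum_add_distrib]
    exact Finset.sum_congr rfl fun t _ => by rw [hfsel x t, hfr t]
  have hIGle : ∀ x, selGain R depth P x ≤ fsum R depth r {r} P := fun x => by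
    have := hkey x; omega
  -- the maximizer
  obtain ⟨x₀, hx₀Y, hx₀⟩ := Finset.exists_mem_eq_sup' hY (selGain R depth P)
  set M := Y.sup' hY (selGain R depth P) with hM
  have hMle : ∀ x ∈ Y, selGain R depth P x ≤ M := fun x hx => Finset.le_sup' _ hx
  have hMfr : M ≤ fsum R depth r {r} P := hx₀ ▸ hIGle x₀
  -- characterize singleton sets
  have hsingle : ∀ S : Finset V, S ⊆ Y → S.Nonempty → S.card ≤ 1 → ∃ x ∈ Y, S = {x} := by
    intro S hSY hSne hScard
    have : S.card = 1 := le_antisymm hScard (Finset.card_pos.mpr hSne)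
    obtain ⟨x, hx⟩ := Finset.card_eq_one.mp this
    exact ⟨x, hSY (hx ▸ Finset.mem_singleton_self x), hx⟩
  -- compute the sSup
  set A := {m : ℤ | ∃ S : Finset V, S ⊆ Y ∧ S.Nonempty ∧ S.card ≤ 1 ∧
      m = ∑ x ∈ S, (selGain R depth P x : ℤ)} with hA
  have hmemA : ((selGain R depth P x₀ : ℕ) : ℤ) ∈ A :=
    ⟨{x₀}, Finset.singleton_subset_iff.mpr hx₀Y, Finset.singleton_nonempty x₀, by simp, by simp⟩
  have hAbdd : ∀ m ∈ A, m ≤ (M : ℤ) := by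
    rintro m ⟨S, hSY, hSne, hScard, rfl⟩
    obtain ⟨x, hxY, rfl⟩ := hsingle S hSY hSne hScard
    simpa using Int.ofNat_le.mpr (hMle x hxY)
  have hsupA : sSup A = (M : ℤ) := by
    apply le_antisymm
    · exact csSup_le ⟨_, hmemA⟩ hAbdd
    · show (M : ℤ) ≤ sSup A
      rw [hx₀]
      exact le_csSup ⟨(M : ℤ), hAbdd⟩ hmemA
  -- compute the sInf
  have hB : gpen R depth r Y P 1 = fsum R depth r {r} P - M := by
    rw [gpen]
    apply le_antisymm
    · apply Nat.sInf_le
      refine ⟨{x₀}, Finset.singleton_subset_iff.mpr hx₀Y, Finset.singleton_nonempty x₀, by simp, ?_⟩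
      have := hkey x₀
      show fsum R depth r {r} P - M = _
      rw [hx₀]
      omega
    · have hne : {n : ℕ | ∃ S : Finset V, S ⊆ Y ∧ S.Nonempty ∧ S.card ≤ 1 ∧
          n = fsum R depth r S P}.Nonempty :=
        ⟨fsum R depth r {x₀} P, ⟨{x₀}, Finset.singleton_subset_iff.mpr hx₀Y,
          Finset.singleton_nonempty x₀, by simp, rfl⟩⟩
      apply le_csInf hne
      rintro n ⟨S, hSY, hSne, hScard, rfl⟩
      obtain ⟨x, hxY, rfl⟩ := hsingle S hSY hSne hScard
      have h1 := hkey x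
      have h2 := hMle x hxY
      omega
  rw [gapprox, hsupA, hB, Nat.cast_sub hMfr]
end
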